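/- There exist a constant c > 0 and a family of rotations O_m ∈ SO(3), indexed by m ∈ (ℤ/2ℤ)⁴ (so 16 rotations), with O₀ equal to the identity, such that for all f, f' ∈ F and all m, m' ∈ (ℤ/2ℤ)⁴, one has |O_m f + O_{m'} f'| ≥ c unless f' = −f and m' = m. -/

import Mathlib

noncomputable section

open Matrix

/-- The golden ratio φ = (1+√5)/2. -/
def gr : ℝ := (1 + Real.sqrt 5) / 2

/-- The normalizing factor √(1+φ²). -/
def dn : ℝ := Real.sqrt (1 + gr ^ 2)

/-- The six unit face normals of a regular dodecahedron, one from each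
antipodal pair: (0,1,±φ), (1,±φ,0), (±φ,0,1), each divided by √(1+φ²). -/
def Fhat : Fin 6 → (Fin 3 → ℝ) :=
  ![dn⁻¹ • ![(0:ℝ), 1, gr], dn⁻¹ • ![(0:ℝ), 1, -gr], dn⁻¹ • ![(1:ℝ), gr, 0],
    dn⁻¹ • ![(1:ℝ), -gr, 0], dn⁻¹ • ![gr, 0, 1], dn⁻¹ • ![-gr, 0, 1]]

/-- The full set of 12 unit face normals of the regular dodecahedron. -/
def Fset : Set (Fin 3 → ℝ) := {f | ∃ i : Fin 6, f = Fhat i ∨ f = -Fhat i}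

/-- Euclidean norm on ℝ³. -/
def enorm2 (x : Fin 3 → ℝ) : ℝ := Real.sqrt (∑ i, (x i) ^ 2)

/-- Euclidean inner product on ℝ³. -/
def dotp (x y : Fin 3 → ℝ) : ℝ := ∑ i, x i * y i

/- ### Auxiliary machinery -/

abbrev Z5 := Zsqrtd 5

def AZ : Matrix (Fin 3) (Fin 3) Z5 := !![3,-4,0; 4,3,0; 0,0,5]

def vv : Fin 6 → Fin 3 → Z5 :=
  ![![0,2,⟨1,1⟩], ![0,2,-⟨1,1⟩], ![2,⟨1,1⟩,0], ![2,-⟨1,1⟩,0], ![⟨1,1⟩,0,2], ![-⟨1,1⟩,0,2]]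

def sg (s : Bool) : Z5 := if s then 1 else -1

lemma key : ∀ j : Fin 16, ∀ i i' : Fin 6, ∀ s s' : Bool,
    (j = 0 → ¬(i' = i ∧ s' = !s)) →
    (AZ ^ (j:ℕ)) *ᵥ (sg s • vv i) + ((5:Z5)^(j:ℕ)) • (sg s' • vv i') ≠ 0 := by decide

def ARe : Matrix (Fin 3) (Fin 3) ℝ := !![3,-4,0; 4,3,0; 0,0,5]

def R : Matrix (Fin 3) (Fin 3) ℝ := (5:ℝ)⁻¹ • ARe

lemma h05 : (0:ℤ) ≤ 5 := by norm_num

def tR : Z5 →+* ℝ := Zsqrtd.toReal h05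

lemma tR_inj : Function.Injective tR := by
  apply Zsqrtd.toReal_injective
  intro n h
  have hb1 : n ≤ 3 := by nlinarith
  have hb2 : -3 ≤ n := by nlinarith
  interval_cases n <;> omega

lemma tR_apply (z : Z5) : tR z = (z.re : ℝ) + (z.im : ℝ) * Real.sqrt 5 := by
  simp [tR, Zsqrtd.toReal_apply]

lemma hARe : ARe = (AZ).map tR := by
  ext i j
  fin_cases i <;> fin_cases j <;>
    simp [ARe, AZ, tR_apply, Zsqrtd.ext_iff] <;> norm_num
    -- entries: tR of integer literals

lemma map_mulVec (M : Matrix (Fin 3) (Fin 3) Z5) (x : Fin 3 → Z5) :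
    (M.map tR) *ᵥ (fun k => tR (x k)) = fun k => tR ((M *ᵥ x) k) := by
  ext k
  simp [Matrix.mulVec, dotProduct, map_sum]

lemma pow_map (j : ℕ) : ARe ^ j = (AZ ^ j).map tR := by
  rw [hARe]
  have : (AZ.map tR) = tR.mapMatrix AZ := rfl
  rw [this, ← map_pow]
  rfl

def sgR (s : Bool) : ℝ := if s then 1 else -1

lemma tR_sg (s : Bool) : tR (sg s) = sgR s := by cases s <;> simp [sg, sgR]

lemma dn_pos : 0 < dn := by
  apply Real.sqrt_pos.2
  positivity

lemma hFhat (i : Fin 6) : Fhat i = (2⁻¹ * dn⁻¹) • (fun k => tR (vv i k)) := by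
  have h2gr : (2:ℝ) * gr = 1 + Real.sqrt 5 := by rw [gr]; ring
  ext k
  fin_cases i <;> fin_cases k <;>
    norm_num [Fhat, vv, tR_apply, Pi.smul_apply, smul_eq_mul] <;>
    (try rw [gr]) <;> ring

/-- the scalar factor -/
def kap (j : ℕ) : ℝ := ((5:ℝ)^j)⁻¹ * (2⁻¹ * dn⁻¹)

lemma kap_ne (j : ℕ) : kap j ≠ 0 := by
  unfold kap
  refine mul_ne_zero (by positivity) (mul_ne_zero (by norm_num) ?_)
  exact inv_ne_zero (ne_of_gt dn_pos)

lemma bridge (j : ℕ) (i i' : Fin 6) (s s' : Bool) :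
    (R ^ j) *ᵥ (sgR s • Fhat i) + sgR s' • Fhat i' =
      kap j • fun k =>
        tR (((AZ ^ j) *ᵥ (sg s • vv i) + ((5:Z5)^j) • (sg s' • vv i')) k) := by
  have hsmul : ∀ (z : Z5) (u : Fin 3 → Z5),
      (fun k => tR ((z • u) k)) = tR z • fun k => tR (u k) := by
    intro z u; ext k; simp [Pi.smul_apply, smul_eq_mul]
  have hRj : R ^ j = ((5:ℝ)^j)⁻¹ • ARe ^ j := by
    rw [R, smul_pow, inv_pow]
  rw [hRj, hFhat i, hFhat i']
  have h1 : (((5:ℝ)^j)⁻¹ • ARe ^ j) *ᵥ (sgR s • (2⁻¹ * dn⁻¹) • fun k => tR (vv i k))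
      = kap j • (sgR s • ((ARe ^ j) *ᵥ fun k => tR (vv i k))) := by
    rw [smul_mulVec, mulVec_smul, mulVec_smul, smul_comm (sgR s), smul_smul]
    unfold kap
    rfl
  rw [h1, pow_map, map_mulVec]
  have h2 : sgR s' • (2⁻¹ * dn⁻¹) • (fun k => tR (vv i' k))
      = kap j • ((5:ℝ)^j • sgR s' • fun k => tR (vv i' k)) := by
    rw [smul_comm (sgR s'), smul_smul, smul_smul, smul_smul, kap]
    congr 1
    have h5 : ((5:ℝ)^j) ≠ 0 := by positivity
    field_simp
  rw [h2, ← smul_add]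
  congr 1
  have e1 : (fun k => tR (((AZ ^ j) *ᵥ (sg s • vv i)) k))
      = sgR s • fun k => tR (((AZ ^ j) *ᵥ vv i) k) := by
    rw [mulVec_smul, hsmul, tR_sg]
  have e2 : (fun k => tR ((((5:Z5)^j) • (sg s' • vv i')) k))
      = (5:ℝ)^j • sgR s' • fun k => tR (vv i' k) := by
    rw [hsmul, hsmul, tR_sg]
    have : tR ((5:Z5)^j) = (5:ℝ)^j := by
      rw [show (5:Z5) = ((5:ℤ):Z5) by norm_cast, map_pow, map_intCast]
      norm_num
    rw [this]
  have : (fun k => tR (((AZ ^ j) *ᵥ (sg s • vv i) + ((5:Z5)^j) • (sg s' • vv i')) k))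
      = (fun k => tR (((AZ ^ j) *ᵥ (sg s • vv i)) k))
        + fun k => tR ((((5:Z5)^j) • (sg s' • vv i')) k) := by
    ext k; simp [Pi.add_apply]
  rw [this, e1, e2]

lemma enorm2_pos {x : Fin 3 → ℝ} (h : x ≠ 0) : 0 < enorm2 x := by
  apply Real.sqrt_pos.2
  obtain ⟨k, hk⟩ := Function.ne_iff.1 h
  apply Finset.sum_pos' (fun i _ => sq_nonneg _) ⟨k, Finset.mem_univ k, pow_two_pos_of_ne_zero hk⟩

lemma enorm2_mulVec {M : Matrix (Fin 3) (Fin 3) ℝ} (h : Mᵀ * M = 1) (x : Fin 3 → ℝ) :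
    enorm2 (M *ᵥ x) = enorm2 x := by
  unfold enorm2
  congr 1
  have hd : ∀ v : Fin 3 → ℝ, ∑ i, (v i)^2 = v ⬝ᵥ v := by
    intro v; simp [dotProduct, sq]
  rw [hd, hd]
  calc (M *ᵥ x) ⬝ᵥ (M *ᵥ x) = ((M *ᵥ x) ᵥ* M) ⬝ᵥ x := by rw [Matrix.dotProduct_mulVec]
    _ = (Mᵀ *ᵥ (M *ᵥ x)) ⬝ᵥ x := by rw [Matrix.mulVec_transpose]
    _ = x ⬝ᵥ x := by rw [Matrix.mulVec_mulVec, h, Matrix.one_mulVec]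

lemma hRorth : Rᵀ * R = 1 := by
  ext i j
  fin_cases i <;> fin_cases j <;>
    norm_num [R, ARe, Matrix.mul_apply, Fin.sum_univ_three, Matrix.one_apply,
      Matrix.transpose_apply, Matrix.vecHead, Matrix.vecTail, Fin.ext_iff, Matrix.cons_val_two]

lemma hRpow_orth (n : ℕ) : (R ^ n)ᵀ * (R ^ n) = 1 := by
  rw [Matrix.transpose_pow]
  induction n with
  | zero => simp
  | succ n ih =>
    rw [pow_succ (Rᵀ), pow_succ' R, mul_assoc, ← mul_assoc Rᵀ, hRorth, one_mul, ih]

lemma hRdet : R.det = 1 := by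
  rw [R, Matrix.det_smul]
  rw [show ARe.det = 125 by rw [ARe, Matrix.det_fin_three]; norm_num [Matrix.cons_val_two]]
  norm_num

def emm (m : Fin 4 → ZMod 2) : ℕ :=
  (m 0).val + 2*(m 1).val + 4*(m 2).val + 8*(m 3).val

lemma emm_le (m : Fin 4 → ZMod 2) : emm m ≤ 15 := by
  revert m; decide

lemma emm_inj : ∀ m m' : Fin 4 → ZMod 2, emm m = emm m' → m = m' := by decide

lemma emm_zero : emm 0 = 0 := by decide

def gg : Fin 16 × Fin 6 × Bool × Fin 6 × Bool → ℝ := fun x =>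
  enorm2 ((R ^ (x.1 : ℕ)) *ᵥ (sgR x.2.2.1 • Fhat x.2.1) + sgR x.2.2.2.2 • Fhat x.2.2.2.1)

def PP (x : Fin 16 × Fin 6 × Bool × Fin 6 × Bool) : Prop :=
  ¬(x.1 = 0 ∧ x.2.2.2.1 = x.2.1 ∧ x.2.2.2.2 = !x.2.2.1)

instance : DecidablePred PP := fun x => by unfold PP; infer_instance

def TT : Finset (Fin 16 × Fin 6 × Bool × Fin 6 × Bool) := Finset.univ.filter PP

lemma TT_ne : TT.Nonempty := ⟨(1, 0, true, 0, true), by decide⟩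

theorem dodecahedron_rotations :
    ∃ (c : ℝ) (O : (Fin 4 → ZMod 2) → Matrix (Fin 3) (Fin 3) ℝ),
      0 < c ∧
      (∀ m, (O m)ᵀ * O m = 1 ∧ (O m).det = 1) ∧
      O 0 = 1 ∧
      (∀ f ∈ Fset, ∀ f' ∈ Fset, ∀ m m' : Fin 4 → ZMod 2,
        ¬(f' = -f ∧ m' = m) →
          c ≤ enorm2 ((O m).mulVec f + (O m').mulVec f')) := by
  refine ⟨TT.inf' TT_ne gg, fun m => R ^ (emm m), ?_, ?_, ?_, ?_⟩
  · -- positivity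
    rw [Finset.lt_inf'_iff]
    rintro ⟨j, i, s, i', s'⟩ hx
    have hP : PP (j, i, s, i', s') := (Finset.mem_filter.1 hx).2
    apply enorm2_pos
    rw [bridge]
    intro hc
    have hW := key j i i' s s' (by intro h0; exact fun hc' => hP ⟨h0, hc'⟩)
    apply hW
    funext k
    apply tR_inj
    have := congrFun hc k
    rw [Pi.smul_apply, Pi.zero_apply, smul_eq_mul] at this
    have h0 : tR ((AZ ^ (j:ℕ) *ᵥ (sg s • vv i) + (5:Z5) ^ (j:ℕ) • (sg s' • vv i')) k) = 0 := by
      rcases mul_eq_zero.1 this with h | h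
      · exact absurd h (kap_ne _)
      · exact h
    simpa using h0
  · intro m
    exact ⟨hRpow_orth _, by rw [Matrix.det_pow, hRdet, one_pow]⟩
  · show R ^ emm 0 = 1
    rw [emm_zero, pow_zero]
  · rintro f ⟨i, hi⟩ f' ⟨i', hi'⟩ m m' hcond
    obtain ⟨s, hs⟩ : ∃ s, f = sgR s • Fhat i := by
      rcases hi with h | h
      · exact ⟨true, by simp [sgR, h]⟩
      · exact ⟨false, by simp [sgR, h]⟩
    obtain ⟨s', hs'⟩ : ∃ s', f' = sgR s' • Fhat i' := by
      rcases hi' with h | h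
      · exact ⟨true, by simp [sgR, h]⟩
      · exact ⟨false, by simp [sgR, h]⟩
    subst hs hs'
    have hanti : ∀ (hi'i : i' = i) (hs2 : s' = !s),
        sgR s' • Fhat i' = -(sgR s • Fhat i) := by
      rintro rfl rfl
      cases s <;> simp [sgR]
    rcases le_or_gt (emm m') (emm m) with hle | hlt
    · set j : ℕ := emm m - emm m' with hj
      have hsplit : R ^ (emm m) = R ^ (emm m') * R ^ j := by
        rw [← pow_add]; congr 1; omega
      have hvec : (R ^ emm m) *ᵥ (sgR s • Fhat i) + (R ^ emm m') *ᵥ (sgR s' • Fhat i')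
          = (R ^ emm m') *ᵥ ((R ^ j) *ᵥ (sgR s • Fhat i) + sgR s' • Fhat i') := by
        rw [Matrix.mulVec_add, hsplit, ← Matrix.mulVec_mulVec]
      rw [hvec, enorm2_mulVec (hRpow_orth _)]
      have hjle : j < 16 := by have := emm_le m; omega
      have hmem : (⟨j, hjle⟩, i, s, i', s') ∈ TT := by
        rw [TT, Finset.mem_filter]
        refine ⟨Finset.mem_univ _, ?_⟩
        rintro ⟨h0, h1, h2⟩
        have hj0 : j = 0 := by
          have := congrArg Fin.val h0; simpa using this
        have hmm : m = m' := emm_inj _ _ (by omega)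
        exact hcond ⟨hanti h1 h2, hmm.symm⟩
      have := Finset.inf'_le gg hmem
      exact this
    · set j : ℕ := emm m' - emm m with hj
      have hsplit : R ^ (emm m') = R ^ (emm m) * R ^ j := by
        rw [← pow_add]; congr 1; omega
      have hvec : (R ^ emm m) *ᵥ (sgR s • Fhat i) + (R ^ emm m') *ᵥ (sgR s' • Fhat i')
          = (R ^ emm m) *ᵥ ((R ^ j) *ᵥ (sgR s' • Fhat i') + sgR s • Fhat i) := by
        rw [Matrix.mulVec_add, hsplit, ← Matrix.mulVec_mulVec, add_comm]
      rw [hvec, enorm2_mulVec (hRpow_orth _)]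
      have hjle : j < 16 := by have := emm_le m'; omega
      have hmem : (⟨j, hjle⟩, i', s', i, s) ∈ TT := by
        rw [TT, Finset.mem_filter]
        refine ⟨Finset.mem_univ _, ?_⟩
        rintro ⟨h0, _, _⟩
        have hj0 : j = 0 := by
          have := congrArg Fin.val h0; simpa using this
        omega
      have := Finset.inf'_le gg hmem
      exact this
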